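/- For any (ε,δ)-differentially private mechanism M, the total variation distance between M(D₀) and M(D₁) for neighboring datasets D₀, D₁ is at most (e^ε − 1 + 2δ)/(e^ε + 1). -/
import Mathlib


open MeasureTheory

/-- For any (ε,δ)-differentially private mechanism, the total variation
distance between the output distributions on neighboring datasets `P = M(D₀)` and
`Q = M(D₁)` is at most `(e^ε − 1 + 2δ)/(e^ε + 1)`. -/
theorem dp_implies_tv_bound {Θ : Type*} [MeasurableSpace Θ]
    (P Q : Measure Θ) [IsProbabilityMeasure P] [IsProbabilityMeasure Q]
    (ε δ : ℝ) (hε : 0 ≤ ε) (hδ : 0 ≤ δ)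
    (hDP : ∀ S : Set Θ, MeasurableSet S →
      (P S).toReal ≤ Real.exp ε * (Q S).toReal + δ ∧
      (Q S).toReal ≤ Real.exp ε * (P S).toReal + δ) :
    ∀ S : Set Θ, MeasurableSet S →
      |(P S).toReal - (Q S).toReal| ≤ (Real.exp ε - 1 + 2 * δ) / (Real.exp ε + 1) := by
  intro S hS
  obtain ⟨h1, h2⟩ := hDP S hS
  obtain ⟨h3, h4⟩ := hDP Sᶜ hS.compl
  have hPc : (P Sᶜ).toReal = 1 - (P S).toReal := by
    rw [prob_compl_eq_one_sub hS, ENNReal.toReal_sub_of_le prob_le_one (by simp)]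
    simp
  have hQc : (Q Sᶜ).toReal = 1 - (Q S).toReal := by
    rw [prob_compl_eq_one_sub hS, ENNReal.toReal_sub_of_le prob_le_one (by simp)]
    simp
  rw [hPc, hQc] at h3 h4
  have he : 1 ≤ Real.exp ε := Real.one_le_exp hε
  have hpos : 0 < Real.exp ε + 1 := by linarith
  rw [abs_le]
  constructor
  · rw [neg_le, neg_sub, le_div_iff₀ hpos]
    nlinarith [h2, h3, (P S).toReal_nonneg, (Q S).toReal_nonneg]
  · rw [le_div_iff₀ hpos]
    nlinarith [h1, h4, (P S).toReal_nonneg, (Q S).toReal_nonneg]
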